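/- arXiv:1009.2673 — 2 statements merged into one kernel-verified Lean document; each statement's English description precedes it below -/
import Mathlib

section
/- Let E be a real inner product space of dimension 2n with 2n ≥ 4, J a compatible almost complex structure, and R an algebraic curvature tensor on E that is an RK-tensor and has constant antiholomorphic sectional curvature ν = 0. If x, y ∈ E are orthonormal vectors with ⟨Jx,y⟩ = 0 (and hence also ⟨x,Jy⟩ = 0) such that R(x,Jx,Jy,y) = 0, then S(x,x) + S(y,y) = 0, where S is the Ricci tensor of R. -/
set_option maxHeartbeats 2000000


open scoped RealInnerProductSpace

/-- For an RK-curvature tensor of constant antiholomorphic sectional curvature ν on a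
2n-dimensional space (2n ≥ 4): if ν = 0 and R(x,Jx,Jy,y) = 0 for an antiholomorphic orthonormal pair x, y, then S(x,x) + S(y,y) = 0. -/
theorem stmt_6 {E : Type*} [NormedAddCommGroup E] [InnerProductSpace ℝ E]
    {n : ℕ} (hn : 4 ≤ 2 * n)
    (b : OrthonormalBasis (Fin (2 * n)) ℝ E)
    (J : E →ₗ[ℝ] E)
    (hJ2 : ∀ x : E, J (J x) = -x)
    (hJg : ∀ x y : E, ⟪J x, J y⟫ = ⟪x, y⟫)
    (R : E →ₗ[ℝ] E →ₗ[ℝ] E →ₗ[ℝ] E →ₗ[ℝ] ℝ)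
    (hR1 : ∀ x y z u : E, R x y z u = - R y x z u)
    (hR2 : ∀ x y z u : E, R x y z u = - R x y u z)
    (hRb : ∀ x y z u : E, R x y z u + R y z x u + R z x y u = 0)
    (hRK : ∀ x y z u : E, R x y z u = R (J x) (J y) (J z) (J u))
    (ν : ℝ)
    (hν : ∀ x y : E, ‖x‖ = 1 → ‖y‖ = 1 → ⟪x, y⟫ = 0 → ⟪J x, y⟫ = 0 →
      R x y y x = ν)
    (S : E → E → ℝ)
    (hS : ∀ x y : E, S x y = ∑ i, R (b i) x y (b i))
    (hν0 : ν = 0) :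
    ∀ x y : E, ‖x‖ = 1 → ‖y‖ = 1 → ⟪x, y⟫ = 0 → ⟪J x, y⟫ = 0 →
      R x (J x) (J y) y = 0 → S x x + S y y = 0 := by
  subst hν0
  -- skew-adjointness of J
  have hJs : ∀ u v : E, ⟪J u, v⟫ = -⟪u, J v⟫ := by
    intro u v
    have h := hJg u (J v)
    rw [hJ2, inner_neg_right] at h
    linarith
  have hJuu : ∀ u : E, ⟪u, J u⟫ = 0 := by
    intro u
    have h := hJs u u
    have h2 := real_inner_comm (J u) u
    linarith
  -- scaled version of the antiholomorphic curvature condition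
  have hν' : ∀ u v : E, ⟪u, v⟫ = 0 → ⟪J u, v⟫ = 0 → R u v v u = 0 := by
    intro u v huv hJuv
    rcases eq_or_ne u 0 with hu | hu
    · simp [hu]
    rcases eq_or_ne v 0 with hv | hv
    · simp [hv]
    have hnu : ‖u‖ ≠ 0 := norm_ne_zero_iff.mpr hu
    have hnv : ‖v‖ ≠ 0 := norm_ne_zero_iff.mpr hv
    have h1 : ‖(‖u‖⁻¹ • u)‖ = 1 := norm_smul_inv_norm hu
    have h2 : ‖(‖v‖⁻¹ • v)‖ = 1 := norm_smul_inv_norm hv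
    have h3 : ⟪(‖u‖⁻¹ • u), (‖v‖⁻¹ • v)⟫ = 0 := by
      rw [real_inner_smul_left, real_inner_smul_right, huv]; ring
    have h4 : ⟪J (‖u‖⁻¹ • u), (‖v‖⁻¹ • v)⟫ = 0 := by
      rw [map_smul, real_inner_smul_left, real_inner_smul_right, hJuv]; ring
    have h5 := hν _ _ h1 h2 h3 h4
    simp only [map_smul, LinearMap.smul_apply, smul_eq_mul] at h5
    have hfac : ‖u‖⁻¹ * (‖v‖⁻¹ * (‖v‖⁻¹ * (‖u‖⁻¹))) ≠ 0 := by
      positivity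
    have : ‖u‖⁻¹ * (‖v‖⁻¹ * (‖v‖⁻¹ * (‖u‖⁻¹ * R u v v u))) = 0 := by
      linarith
    have h6 : ‖u‖⁻¹ * (‖v‖⁻¹ * (‖v‖⁻¹ * ‖u‖⁻¹)) * R u v v u = 0 := by ring_nf; ring_nf at this; linarith
    rcases mul_eq_zero.mp h6 with h | h
    · exact absurd h (by positivity)
    · exact h
  -- sum-representation for linear functionals
  have hsum : ∀ (f : E →ₗ[ℝ] ℝ) (z : E), f z = ∑ i, ⟪b i, z⟫ * f (b i) := by
    intro f z
    conv_lhs => rw [← b.sum_repr z]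
    rw [map_sum]
    refine Finset.sum_congr rfl fun i _ => ?_
    rw [map_smul, smul_eq_mul, b.repr_apply_apply]
  -- reduction of the Ricci curvature to holomorphic sectional curvature
  have ricci : ∀ x : E, ‖x‖ = 1 → (∑ i, R (b i) x x (b i)) = R (J x) x x (J x) := by
    intro x hx
    have hxx : ⟪x, x⟫ = (1:ℝ) := by
      rw [real_inner_self_eq_norm_sq, hx]; norm_num
    have hxJx : ⟪x, J x⟫ = 0 := hJuu x
    have hJxx : ⟪J x, x⟫ = 0 := by rw [real_inner_comm]; exact hxJx
    have hJxJx : ⟪J x, J x⟫ = (1:ℝ) := by rw [hJg]; exact hxx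
    have hz1 : ∀ a c : E, R x x a c = 0 := by
      intro a c; have := hR1 x x a c; linarith
    have hz2 : ∀ a c : E, R a c x x = 0 := by
      intro a c; have := hR2 a c x x; linarith
    have key : ∀ v : E, R v x x v =
        ⟪v, J x⟫ * R v x x (J x) + ⟪v, J x⟫ * R (J x) x x v
          - ⟪v, J x⟫ ^ 2 * R (J x) x x (J x) := by
      intro v
      set α := ⟪v, x⟫ with hα
      set β := ⟪v, J x⟫ with hβ
      set w := v - α • x - β • J x with hw
      have hv : v = w + α • x + β • J x := by rw [hw]; abel
      have hwx : ⟪x, w⟫ = 0 := by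
        rw [hw]
        rw [inner_sub_right, inner_sub_right, real_inner_smul_right, real_inner_smul_right,
          hxx, hxJx, hα, real_inner_comm]
        ring
      have hJwx : ⟪J x, w⟫ = 0 := by
        rw [hw]
        rw [inner_sub_right, inner_sub_right, real_inner_smul_right, real_inner_smul_right,
          hJxx, hJxJx, hβ, real_inner_comm]
        ring
      have hw0 : R x w w x = 0 := hν' x w hwx hJwx
      have hw0' : R w x x w = 0 := by
        have h1 := hR1 w x x w
        have h2 := hR2 x w x w
        linarith
      rw [hv]
      simp only [map_add, map_smul, LinearMap.add_apply, LinearMap.smul_apply, smul_eq_mul]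
      linear_combination hw0' + α * hz2 w x + α * hz1 x w + α ^ 2 * hz1 x x
    have fdef : ∃ f : E →ₗ[ℝ] ℝ, ∀ v : E, f v = R v x x (J x) := by
      refine ⟨LinearMap.mk (AddHom.mk (fun v => R v x x (J x)) ?_) ?_, fun v => rfl⟩
      · intro a c
        simp [map_add, LinearMap.add_apply]
      · intro c a
        simp [map_smul, LinearMap.smul_apply]
    obtain ⟨f, hf⟩ := fdef
    have h1 : R (J x) x x (J x) = ∑ i, ⟪b i, J x⟫ * R (b i) x x (J x) := by
      have := hsum f (J x)
      rw [hf] at this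
      rw [this]
      exact Finset.sum_congr rfl fun i _ => by rw [hf]
    have h2 : R (J x) x x (J x) = ∑ i, ⟪b i, J x⟫ * R (J x) x x (b i) :=
      hsum (R (J x) x x) (J x)
    have h3 : (∑ i, ⟪b i, J x⟫ ^ 2) = (1:ℝ) := by
      have h := b.sum_inner_mul_inner (J x) (J x)
      rw [hJxJx] at h
      rw [← h]
      exact Finset.sum_congr rfl fun i _ => by rw [sq, real_inner_comm]
    calc (∑ i, R (b i) x x (b i))
        = ∑ i, (⟪b i, J x⟫ * R (b i) x x (J x) + ⟪b i, J x⟫ * R (J x) x x (b i)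
            - ⟪b i, J x⟫ ^ 2 * R (J x) x x (J x)) :=
          Finset.sum_congr rfl fun i _ => key (b i)
      _ = (∑ i, ⟪b i, J x⟫ * R (b i) x x (J x)) + (∑ i, ⟪b i, J x⟫ * R (J x) x x (b i))
            - (∑ i, ⟪b i, J x⟫ ^ 2) * R (J x) x x (J x) := by
          rw [Finset.sum_sub_distrib, Finset.sum_add_distrib, Finset.sum_mul]
      _ = R (J x) x x (J x) := by rw [← h1, ← h2, h3]; ring
  -- main argument
  intro x y hx hy hxy hJxy hQ
  have hxx : ⟪x, x⟫ = (1:ℝ) := by rw [real_inner_self_eq_norm_sq, hx]; norm_num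
  have hyy : ⟪y, y⟫ = (1:ℝ) := by rw [real_inner_self_eq_norm_sq, hy]; norm_num
  have hXX : ⟪J x, J x⟫ = (1:ℝ) := by rw [hJg]; exact hxx
  have hYY : ⟪J y, J y⟫ = (1:ℝ) := by rw [hJg]; exact hyy
  have hxX : ⟪x, J x⟫ = 0 := hJuu x
  have hXx : ⟪J x, x⟫ = 0 := by rw [real_inner_comm]; exact hxX
  have hyY : ⟪y, J y⟫ = 0 := hJuu y
  have hYy : ⟪J y, y⟫ = 0 := by rw [real_inner_comm]; exact hyY
  have hyx : ⟪y, x⟫ = 0 := by rw [real_inner_comm]; exact hxy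
  have hxY : ⟪x, J y⟫ = 0 := by have := hJs x y; linarith
  have hYx : ⟪J y, x⟫ = 0 := by rw [real_inner_comm]; exact hxY
  have hXY : ⟪J x, J y⟫ = 0 := by rw [hJg]; exact hxy
  have hYX : ⟪J y, J x⟫ = 0 := by rw [real_inner_comm]; exact hXY
  have hyX : ⟪y, J x⟫ = 0 := by rw [real_inner_comm]; exact hJxy
  have e1 : R (x + J x) (y + J y) (y + J y) (x + J x) = 0 := by
    apply hν'
    · simp only [inner_add_left, inner_add_right, inner_sub_left, inner_sub_right,
        hxx, hyy, hXX, hYY, hxX, hXx, hyY, hYy, hxy, hyx, hxY, hYx, hXY, hYX, hJxy, hyX]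
      ring
    · simp only [map_add, map_sub, hJ2, inner_add_left, inner_add_right, inner_sub_left,
        inner_sub_right, inner_neg_left, inner_neg_right,
        hxx, hyy, hXX, hYY, hxX, hXx, hyY, hYy, hxy, hyx, hxY, hYx, hXY, hYX, hJxy, hyX]
      ring
  simp only [map_add, map_sub, LinearMap.add_apply, LinearMap.sub_apply] at e1
  have e2 : R (x + J x) (y - J y) (y - J y) (x + J x) = 0 := by
    apply hν'
    · simp only [inner_add_left, inner_add_right, inner_sub_left, inner_sub_right,
        hxx, hyy, hXX, hYY, hxX, hXx, hyY, hYy, hxy, hyx, hxY, hYx, hXY, hYX, hJxy, hyX]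
      ring
    · simp only [map_add, map_sub, hJ2, inner_add_left, inner_add_right, inner_sub_left,
        inner_sub_right, inner_neg_left, inner_neg_right,
        hxx, hyy, hXX, hYY, hxX, hXx, hyY, hYy, hxy, hyx, hxY, hYx, hXY, hYX, hJxy, hyX]
      ring
  simp only [map_add, map_sub, LinearMap.add_apply, LinearMap.sub_apply] at e2
  have e3 : R (x + y) (x - y) (x - y) (x + y) = 0 := by
    apply hν'
    · simp only [inner_add_left, inner_add_right, inner_sub_left, inner_sub_right,
        hxx, hyy, hXX, hYY, hxX, hXx, hyY, hYy, hxy, hyx, hxY, hYx, hXY, hYX, hJxy, hyX]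
      ring
    · simp only [map_add, map_sub, hJ2, inner_add_left, inner_add_right, inner_sub_left,
        inner_sub_right, inner_neg_left, inner_neg_right,
        hxx, hyy, hXX, hYY, hxX, hXx, hyY, hYy, hxy, hyx, hxY, hYx, hXY, hYX, hJxy, hyX]
      ring
  simp only [map_add, map_sub, LinearMap.add_apply, LinearMap.sub_apply] at e3
  have e4 : R (x + y) (J x - J y) (J x - J y) (x + y) = 0 := by
    apply hν'
    · simp only [inner_add_left, inner_add_right, inner_sub_left, inner_sub_right,
        hxx, hyy, hXX, hYY, hxX, hXx, hyY, hYy, hxy, hyx, hxY, hYx, hXY, hYX, hJxy, hyX]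
      ring
    · simp only [map_add, map_sub, hJ2, inner_add_left, inner_add_right, inner_sub_left,
        inner_sub_right, inner_neg_left, inner_neg_right,
        hxx, hyy, hXX, hYY, hxX, hXx, hyY, hYy, hxy, hyx, hxY, hYx, hXY, hYX, hJxy, hyX]
      ring
  simp only [map_add, map_sub, LinearMap.add_apply, LinearMap.sub_apply] at e4
  have rk1 : R x x (J y) (J x) = R (J x) (J x) y x := by
    have h := hRK x x (J y) (J x)
    simp only [hJ2, map_neg, LinearMap.neg_apply, neg_neg] at h
    exact h
  have rk2 : R x x (J y) (J y) = R (J x) (J x) y y := by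
    have h := hRK x x (J y) (J y)
    simp only [hJ2, map_neg, LinearMap.neg_apply, neg_neg] at h
    exact h
  have rk3 : R x (J x) x (J y) = R (J x) x (J x) y := by
    have h := hRK x (J x) x (J y)
    simp only [hJ2, map_neg, LinearMap.neg_apply, neg_neg] at h
    exact h
  have rk4 : R x y (J x) (J y) = R (J x) (J y) x y := by
    have h := hRK x y (J x) (J y)
    simp only [hJ2, map_neg, LinearMap.neg_apply, neg_neg] at h
    exact h
  have rk5 : R x y y x = R (J x) (J y) (J y) (J x) := by
    have h := hRK x y y x
    exact h
  have rk6 : R x y y (J x) = -(R (J x) (J y) (J y) x) := by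
    have h := hRK x y y (J x)
    simp only [hJ2, map_neg, LinearMap.neg_apply, neg_neg] at h
    exact h
  have rk7 : R x y (J y) x = -(R (J x) (J y) y (J x)) := by
    have h := hRK x y (J y) x
    simp only [hJ2, map_neg, LinearMap.neg_apply, neg_neg] at h
    exact h
  have rk8 : R x y (J y) (J x) = R (J x) (J y) y x := by
    have h := hRK x y (J y) (J x)
    simp only [hJ2, map_neg, LinearMap.neg_apply, neg_neg] at h
    exact h
  have rk9 : R x y (J y) (J y) = R (J x) (J y) y y := by
    have h := hRK x y (J y) (J y)
    simp only [hJ2, map_neg, LinearMap.neg_apply, neg_neg] at h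
    exact h
  have rk10 : R x (J y) x (J x) = R (J x) y (J x) x := by
    have h := hRK x (J y) x (J x)
    simp only [hJ2, map_neg, LinearMap.neg_apply, neg_neg] at h
    exact h
  have rk11 : R x (J y) x (J y) = R (J x) y (J x) y := by
    have h := hRK x (J y) x (J y)
    simp only [hJ2, map_neg, LinearMap.neg_apply, neg_neg] at h
    exact h
  have rk12 : R x (J y) y x = -(R (J x) y (J y) (J x)) := by
    have h := hRK x (J y) y x
    simp only [hJ2, map_neg, LinearMap.neg_apply, neg_neg] at h
    exact h
  have rk13 : R x (J y) y (J x) = R (J x) y (J y) x := by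
    have h := hRK x (J y) y (J x)
    simp only [hJ2, map_neg, LinearMap.neg_apply, neg_neg] at h
    exact h
  have rk14 : R x (J y) y (J y) = R (J x) y (J y) y := by
    have h := hRK x (J y) y (J y)
    simp only [hJ2, map_neg, LinearMap.neg_apply, neg_neg] at h
    exact h
  have rk15 : R x (J y) (J y) x = R (J x) y y (J x) := by
    have h := hRK x (J y) (J y) x
    simp only [hJ2, map_neg, LinearMap.neg_apply, neg_neg] at h
    exact h
  have rk16 : R x (J y) (J y) (J x) = -(R (J x) y y x) := by
    have h := hRK x (J y) (J y) (J x)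
    simp only [hJ2, map_neg, LinearMap.neg_apply, neg_neg] at h
    exact h
  rw [hS, hS, ricci x hx, ricci y hy]
  linear_combination (norm := ring1) ((-1:ℝ)/4) * (hR1 x x x x) + ((-3:ℝ)/4) * (hR1 x x x y) + (1:ℝ) * (hR2 x x x y) + ((-1:ℝ)/2) * (hR1 x x (J x) (J x)) + (1:ℝ) * (hRb x x (J x) (J x)) + ((-1:ℝ)/2) * (hR1 x x (J x) (J y)) + (1:ℝ) * (hR2 x x (J x) (J y)) + ((-1:ℝ)/2) * (hRb x x y x) + ((1:ℝ)/2) * (hR1 x x y y) + ((-1:ℝ)/2) * (hRb x x y y) + (-1:ℝ) * rk1 + ((1:ℝ)/2) * (hR1 x x (J y) (J y)) + (-1:ℝ) * rk2 + (-1:ℝ) * (hR2 x (J x) x (J x)) + (1:ℝ) * (hR2 x (J x) x (J y)) + (-1:ℝ) * rk3 + (-1:ℝ) * (hR1 x (J x) (J x) y) + (-2:ℝ) * (hRb x (J x) (J y) y) + ((1:ℝ)/2) * (hR2 x y x x) + (1:ℝ) * (hR2 x y x y) + (2:ℝ) * (hR2 x y (J x) (J y)) + (-2:ℝ) * rk4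 + ((1:ℝ)/2) * (hRb x y y x) + (-1:ℝ) * rk5 + (1:ℝ) * rk6 + ((-1:ℝ)/2) * (hR1 x y y y) + ((-1:ℝ)/2) * (hR2 x y y y) + (1:ℝ) * (hRb x y y y) + ((1:ℝ)/2) * rk7 + ((-3:ℝ)/2) * rk8 + (1:ℝ) * (hRb x y (J y) (J y)) + (-1:ℝ) * rk9 + (1:ℝ) * (hR2 x (J y) x (J x)) + (-1:ℝ) * rk10 + (1:ℝ) * (hR2 x (J y) x (J y)) + (-1:ℝ) * rk11 + (2:ℝ) * (hR1 x (J y) (J x) y) + (-1:ℝ) * (hR2 x (J y) (J x) y) + ((1:ℝ)/2) * rk12 + ((3:ℝ)/2) * rk13 + (-1:ℝ) * (hR1 x (J y) y (J y)) + (-1:ℝ) * (hR2 x (J y) y (J y)) + (2:ℝ) * rk14 + (-1:ℝ) * rk15 + (1:ℝ) * rk16 + (-1:ℝ) * (hRb (J x) (J x) y x) + (-1:ℝ) * (hRb (J x) (J x) y y) + (1:ℝ) * (hR1 (J x) y (J y) x) + (1:ℝ) * (hRb (J x) y (J y) x) + (1:ℝ) * (hR1 (J x) y (J y) y) + (1:ℝ)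 * (hRb (J x) y (J y) y) + (-1:ℝ) * (hR1 (J x) (J y) y x) + (-1:ℝ) * (hR1 (J x) (J y) y y) + ((-1:ℝ)/2) * (hR2 y y x y) + ((-1:ℝ)/4) * (hR1 y y y y) + ((-1:ℝ)/2) * (hR1 y y (J y) (J y)) + (1:ℝ) * (hRb y y (J y) (J y)) + (-1:ℝ) * (hR2 y (J y) x (J y)) + (-1:ℝ) * (hR2 y (J y) y (J y)) + ((-3:ℝ)/4) * e1 + ((-1:ℝ)/4) * e2 + ((1:ℝ)/2) * e3 + (1:ℝ) * e4 + (3:ℝ) * hQ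
end

section
/- Let E be a real inner product space of dimension 2n with 2n ≥ 4, J a compatible almost complex structure, and R an algebraic curvature tensor on E that is an RK-tensor and has constant antiholomorphic sectional curvature ν. Define T = R - (1/6)ψ - ν·R₁ + ((2n-1)/3)·ν·R₂. Then T(x,y,y,x) = 0 for every orthonormal pair {x,y} with y = Jx (holomorphic plane) or with ⟨Jx,y⟩ = 0 (antiholomorphic plane). -/
open scoped RealInnerProductSpace

/-- Proposition 1, equation (6): an RK-curvature tensor of constant antiholomorphic
sectional curvature ν gives a tensor T = R - (1/6)ψ - ν R₁ + ((2n-1)/3) ν R₂ vanishing on holomorphic and antiholomorphic planes. -/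
theorem stmt_7 {E : Type*} [NormedAddCommGroup E] [InnerProductSpace ℝ E]
    {n : ℕ} (hn : 4 ≤ 2 * n)
    (b : OrthonormalBasis (Fin (2 * n)) ℝ E)
    (J : E →ₗ[ℝ] E)
    (hJ2 : ∀ x : E, J (J x) = -x)
    (hJg : ∀ x y : E, ⟪J x, J y⟫ = ⟪x, y⟫)
    (R : E →ₗ[ℝ] E →ₗ[ℝ] E →ₗ[ℝ] E →ₗ[ℝ] ℝ)
    (hR1 : ∀ x y z u : E, R x y z u = - R y x z u)
    (hR2 : ∀ x y z u : E, R x y z u = - R x y u z)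
    (hRb : ∀ x y z u : E, R x y z u + R y z x u + R z x y u = 0)
    (hRK : ∀ x y z u : E, R x y z u = R (J x) (J y) (J z) (J u))
    (ν : ℝ)
    (hν : ∀ x y : E, ‖x‖ = 1 → ‖y‖ = 1 → ⟪x, y⟫ = 0 → ⟪J x, y⟫ = 0 →
      R x y y x = ν)
    (S : E → E → ℝ)
    (hS : ∀ x y : E, S x y = ∑ i, R (b i) x y (b i))
    (R₁ : E → E → E → E → ℝ)
    (hR₁def : ∀ x y z u : E, R₁ x y z u = ⟪y, z⟫ * ⟪x, u⟫ - ⟪x, z⟫ * ⟪y, u⟫)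
    (R₂ : E → E → E → E → ℝ)
    (hR₂def : ∀ x y z u : E, R₂ x y z u =
      ⟪J y, z⟫ * ⟪J x, u⟫ - ⟪J x, z⟫ * ⟪J y, u⟫ - 2 * ⟪J x, y⟫ * ⟪J z, u⟫)
    (ψ : E → E → E → E → ℝ)
    (hψdef : ∀ x y z u : E, ψ x y z u =
      ⟪J y, z⟫ * S (J x) u - ⟪J x, z⟫ * S (J y) u - 2 * ⟪J x, y⟫ * S (J z) u
      + ⟪J x, u⟫ * S (J y) z - ⟪J y, u⟫ * S (J x) z - 2 * ⟪J z, u⟫ * S (J x) y)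
    (T : E → E → E → E → ℝ)
    (hTdef : ∀ x y z u : E, T x y z u = R x y z u - (1 / 6) * ψ x y z u
      - ν * R₁ x y z u + ((2 * (n : ℝ) - 1) / 3) * ν * R₂ x y z u) :
    ∀ x y : E, ‖x‖ = 1 → ‖y‖ = 1 → ⟪x, y⟫ = 0 →
      (y = J x ∨ ⟪J x, y⟫ = 0) → T x y y x = 0 := by
  -- basic facts about J
  have hvv : ∀ v : E, ‖v‖ = 1 → ⟪v, v⟫ = 1 := by
    intro v hv
    rw [real_inner_self_eq_norm_mul_norm, hv, one_mul]
  have hJskew' : ∀ a c : E, ⟪J a, c⟫ = - ⟪a, J c⟫ := by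
    intro a c
    have h1 := hJg a (J c)
    rw [hJ2] at h1
    rw [inner_neg_right] at h1
    linarith
  have hJskew : ∀ v : E, ⟪J v, v⟫ = 0 := by
    intro v
    have h1 := hJskew' v v
    have h2 : ⟪v, J v⟫ = ⟪J v, v⟫ := real_inner_comm (J v) v
    linarith
  have hRxx : ∀ a z u : E, R a a z u = 0 := fun a z u => by
    have := hR1 a a z u; linarith
  have hRzz : ∀ a c z : E, R a c z z = 0 := fun a c z => by
    have := hR2 a c z z; linarith
  have hswap : ∀ a c : E, R a c c a = R c a a c := by
    intro a c
    have h1 := hR1 a c c a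
    have h2 := hR2 c a c a
    linarith
  -- antiholomorphic curvature, scaled version
  have hν' : ∀ v w : E, ‖v‖ = 1 → ⟪v, w⟫ = 0 → ⟪J v, w⟫ = 0 →
      R w v v w = ⟪w, w⟫ * ν := by
    intro v w hv hvw hJvw
    rcases eq_or_ne w 0 with rfl | hw
    · simp
    · have hcw : ‖w‖ ≠ 0 := norm_ne_zero_iff.mpr hw
      set u : E := ‖w‖⁻¹ • w with hu
      have hun : ‖u‖ = 1 := by
        rw [hu, norm_smul, norm_inv, norm_norm, inv_mul_cancel₀ hcw]
      have hvu : ⟪v, u⟫ = 0 := by rw [hu, inner_smul_right, hvw, mul_zero]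
      have hJvu : ⟪J v, u⟫ = 0 := by rw [hu, inner_smul_right, hJvw, mul_zero]
      have hval : R v u u v = ν := hν v u hv hun hvu hJvu
      have hwu : w = ‖w‖ • u := by
        rw [hu, smul_smul, mul_inv_cancel₀ hcw, one_smul]
      have hRw : R v w w v = ‖w‖ * (‖w‖ * R v u u v) := by
        conv_lhs => rw [hwu]
        simp [map_smul, LinearMap.smul_apply, smul_eq_mul]
      have hww : ⟪w, w⟫ = ‖w‖ * ‖w‖ := real_inner_self_eq_norm_mul_norm w
      rw [hswap w v, hRw, hval, hww]
      ring
  -- key lemma : Ricci diagonal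
  have key : ∀ v : E, ‖v‖ = 1 →
      (∑ i, R (b i) v v (b i)) = R (J v) v v (J v) + (2 * (n : ℝ) - 2) * ν := by
    intro v hv
    have hv1 : ⟪v, v⟫ = 1 := hvv v hv
    have hJv1 : ⟪J v, J v⟫ = 1 := by rw [hJg]; exact hv1
    have hJvv : ⟪J v, v⟫ = 0 := hJskew v
    have hvJv : ⟪v, J v⟫ = 0 := by rw [real_inner_comm]; exact hJvv
    set w : Fin (2 * n) → E :=
      fun i => b i - ⟪v, b i⟫ • v - ⟪J v, b i⟫ • J v with hwdef
    have hbw : ∀ i, b i = w i + ⟪v, b i⟫ • v + ⟪J v, b i⟫ • J v := by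
      intro i
      simp only [hwdef]
      abel
    have hvw : ∀ i, ⟪v, w i⟫ = 0 := by
      intro i
      rw [hwdef]
      simp only [inner_sub_right, real_inner_smul_right, hv1, hvJv]
      ring
    have hJvw : ∀ i, ⟪J v, w i⟫ = 0 := by
      intro i
      rw [hwdef]
      simp only [inner_sub_right, real_inner_smul_right, hJv1, hJvv]
      ring
    have hbb : ∀ i, ⟪b i, b i⟫ = 1 := fun i => hvv (b i) (b.orthonormal.1 i)
    have hwnorm : ∀ i, ⟪w i, w i⟫ =
        1 - ⟪v, b i⟫ * ⟪v, b i⟫ - ⟪J v, b i⟫ * ⟪J v, b i⟫ := by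
      intro i
      conv_lhs => rw [hwdef]
      simp only [inner_sub_left, inner_sub_right, real_inner_smul_left,
        real_inner_smul_right, hv1, hJv1, hJvv, hvJv, hbb,
        real_inner_comm v (b i), real_inner_comm (J v) (b i)]
      ring
    -- sum identities
    have hsum1 : ∑ i, ⟪v, b i⟫ * ⟪v, b i⟫ = 1 := by
      have := b.sum_inner_mul_inner v v
      rw [hv1] at this
      rw [← this]
      exact Finset.sum_congr rfl fun i _ => by rw [real_inner_comm v (b i)]
    have hsum2 : ∑ i, ⟪J v, b i⟫ * ⟪J v, b i⟫ = 1 := by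
      have := b.sum_inner_mul_inner (J v) (J v)
      rw [hJv1] at this
      rw [← this]
      exact Finset.sum_congr rfl fun i _ => by rw [real_inner_comm (J v) (b i)]
    have hsum3 : ∑ i, ⟪J v, b i⟫ * ⟪v, b i⟫ = 0 := by
      have := b.sum_inner_mul_inner (J v) v
      rw [hJvv] at this
      rw [← this]
      exact Finset.sum_congr rfl fun i _ => by rw [real_inner_comm v (b i)]
    have hrepr : ∑ i, ⟪J v, b i⟫ • b i = J v := by
      have h2 : ∑ i, ⟪J v, b i⟫ • b i = ∑ i, ⟪b i, J v⟫ • b i :=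
        Finset.sum_congr rfl fun i _ => by rw [real_inner_comm (J v) (b i)]
      rw [h2, b.sum_repr']
    have hwsum : ∑ i, ⟪J v, b i⟫ • w i = 0 := by
      have : ∀ i, ⟪J v, b i⟫ • w i
          = ⟪J v, b i⟫ • b i - (⟪J v, b i⟫ * ⟪v, b i⟫) • v
            - (⟪J v, b i⟫ * ⟪J v, b i⟫) • J v := by
        intro i
        rw [hwdef]
        simp only [smul_sub, smul_smul]
      rw [Finset.sum_congr rfl fun i _ => this i]
      rw [Finset.sum_sub_distrib, Finset.sum_sub_distrib, hrepr,
        ← Finset.sum_smul, ← Finset.sum_smul, hsum3, hsum2]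
      simp
    -- per-term expansion
    have hexp : ∀ i, R (b i) v v (b i) =
        ⟪J v, b i⟫ * ⟪J v, b i⟫ * R (J v) v v (J v)
        + ⟪J v, b i⟫ * R (J v) v v (w i)
        + ⟪J v, b i⟫ * R (w i) v v (J v)
        + ⟪w i, w i⟫ * ν := by
      intro i
      conv_lhs => rw [hbw i]
      simp only [map_add, map_smul, LinearMap.add_apply, LinearMap.smul_apply,
        smul_eq_mul, hRxx, hRzz, hν' v (w i) hv (hvw i) (hJvw i)]
      ring
    rw [Finset.sum_congr rfl fun i _ => hexp i]
    rw [Finset.sum_add_distrib, Finset.sum_add_distrib, Finset.sum_add_distrib]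
    have hA : ∑ i, ⟪J v, b i⟫ * ⟪J v, b i⟫ * R (J v) v v (J v)
        = R (J v) v v (J v) := by
      rw [← Finset.sum_mul, hsum2, one_mul]
    have hB : ∑ i, ⟪J v, b i⟫ * R (J v) v v (w i) = 0 := by
      have h : ∑ i, ⟪J v, b i⟫ * R (J v) v v (w i)
          = R (J v) v v (∑ i, ⟪J v, b i⟫ • w i) := by
        rw [map_sum]
        exact Finset.sum_congr rfl fun i _ => by
          rw [map_smul, smul_eq_mul]
      rw [h, hwsum, map_zero]
    have hC : ∑ i, ⟪J v, b i⟫ * R (w i) v v (J v) = 0 := by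
      have h : R (∑ i, ⟪J v, b i⟫ • w i) v v (J v)
          = ∑ i, ⟪J v, b i⟫ * R (w i) v v (J v) := by
        rw [map_sum]
        simp only [LinearMap.coe_sum, Finset.sum_apply, LinearMap.sum_apply,
          map_smul, LinearMap.smul_apply, smul_eq_mul]
      rw [← h, hwsum]
      simp
    have hD : ∑ i, ⟪w i, w i⟫ * ν = (2 * (n : ℝ) - 2) * ν := by
      rw [← Finset.sum_mul]
      have : ∑ i, ⟪w i, w i⟫ = 2 * (n : ℝ) - 2 := by
        rw [Finset.sum_congr rfl fun i _ => hwnorm i]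
        rw [Finset.sum_sub_distrib, Finset.sum_sub_distrib, hsum1, hsum2,
          Finset.sum_const, Finset.card_fin]
        push_cast
        ring
      rw [this]
    rw [hA, hB, hC, hD]
    ring
  -- Ricci formula
  have hSdiag : ∀ v : E, ‖v‖ = 1 →
      S v v = R (J v) v v (J v) + (2 * (n : ℝ) - 2) * ν := by
    intro v hv
    rw [hS]
    exact key v hv
  intro x y hx hy hxy hcase
  rcases hcase with hyJ | hanti
  · -- holomorphic case : y = J x
    subst hyJ
    have hx1 : ⟪x, x⟫ = 1 := hvv x hx
    have hJx1 : ⟪J x, J x⟫ = 1 := by rw [hJg]; exact hx1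
    have hJxx : ⟪J x, x⟫ = 0 := hJskew x
    have hxJx : ⟪x, J x⟫ = 0 := by rw [real_inner_comm]; exact hJxx
    have hJxnorm : ‖J x‖ = 1 := by
      have h := real_inner_self_eq_norm_mul_norm (J x)
      rw [hJx1] at h
      nlinarith [norm_nonneg (J x)]
    have hJJx : J (J x) = -x := hJ2 x
    -- S values
    have hSxx : S x x = R (J x) x x (J x) + (2 * (n : ℝ) - 2) * ν := hSdiag x hx
    have hSJJ : S (J x) (J x) = R (J x) x x (J x) + (2 * (n : ℝ) - 2) * ν := by
      have h := hSdiag (J x) hJxnorm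
      rw [hJJx] at h
      have h2 : R (-x) (J x) (J x) (-x) = R x (J x) (J x) x := by
        simp [map_neg, LinearMap.neg_apply]
        rw [← neg_one_smul ℝ x, map_smul]; simp only [LinearMap.smul_apply, smul_eq_mul]; ring
      rw [h2] at h
      rw [h, hswap x (J x)]
    have hH : R (J x) x x (J x) = R x (J x) (J x) x := hswap (J x) x
    -- inner product values with J J x = -x
    have hJJxJx : ⟪J (J x), J x⟫ = 0 := by
      rw [hJJx, inner_neg_left, hxJx, neg_zero]
    have hJJxx : ⟪J (J x), x⟫ = -1 := by
      rw [hJJx, inner_neg_left, hx1]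
    -- S negation
    have hSneg : ∀ u : E, S (-x) u = - S x u := by
      intro u
      rw [hS, hS, ← Finset.sum_neg_distrib]
      exact Finset.sum_congr rfl fun i _ => by
        simp [map_neg, LinearMap.neg_apply]
    rw [hTdef, hψdef, hR₁def, hR₂def, hJJx]
    simp only [inner_neg_left]
    rw [hxJx, hx1, hJx1, hJxx, hSneg x, hSneg (J x), hSJJ, hSxx,
      hswap x (J x)]
    ring
  · -- antiholomorphic case
    have hJyy : ⟪J y, y⟫ = 0 := hJskew y
    have hJyx : ⟪J y, x⟫ = 0 := by
      rw [hJskew' y x]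
      have : ⟪y, J x⟫ = ⟪J x, y⟫ := real_inner_comm (J x) y
      rw [this, hanti, neg_zero]
    have hRval : R x y y x = ν := hν x y hx hy hxy hanti
    have hyy : ⟪y, y⟫ = 1 := hvv y hy
    have hxx : ⟪x, x⟫ = 1 := hvv x hx
    have hyx : ⟪y, x⟫ = 0 := by rw [real_inner_comm]; exact hxy
    have hJxx : ⟪J x, x⟫ = 0 := hJskew x
    rw [hTdef, hψdef, hR₁def, hR₂def, hRval, hJyy, hJyx, hanti, hJxx,
      hyy, hxx, hxy, hyx]
    ring
end
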